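/- Let k ≥ 1 and suppose t_k is even and s_{k−1} is odd (then s_k and t_{k−1} are odd automatically). With δ = (−1)^{k−1}, the Jacobi symbols satisfy (t_k/s_k) = (−δ/s_k) · (δ/s_{k−1}) · ε(s_{k−1}, s_k) · ε(t_{k−1}, s_{k−1}) · (s_{k−1}/t_{k−1}). -/

import Mathlib

/-- For odd integers `a`, `b`: `ε(a,b) = -1` if `a ≡ b ≡ 3 (mod 4)`, else `1`. -/
def eps (a b : ℤ) : ℤ := if a % 4 = 3 ∧ b % 4 = 3 then -1 else 1

/-- Quadratic reciprocity for the Jacobi symbol, stated over the integers with `eps`. -/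
lemma recipZ {a b : ℤ} (ha0 : 0 < a) (hb0 : 0 < b) (ha : Odd a) (hb : Odd b) :
    jacobiSym a b.toNat = eps a b * jacobiSym b a.toNat := by
  have hA : ((a.toNat : ℕ) : ℤ) = a := Int.toNat_of_nonneg ha0.le
  have hB : ((b.toNat : ℕ) : ℤ) = b := Int.toNat_of_nonneg hb0.le
  have ha' := Int.odd_iff.mp ha
  have hb' := Int.odd_iff.mp hb
  have ha2 : a.toNat % 2 = 1 := by omega
  have hb2 : b.toNat % 2 = 1 := by omega
  have key := jacobiSym.quadratic_reciprocity_if ha2 hb2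
  rw [hA, hB] at key
  have hiff : (a % 4 = 3 ∧ b % 4 = 3) ↔ (a.toNat % 4 = 3 ∧ b.toNat % 4 = 3) := by omega
  simp only [eps]
  rw [← key]
  by_cases h : a % 4 = 3 ∧ b % 4 = 3
  · rw [if_pos h, if_pos (hiff.mp h)]; ring
  · rw [if_neg h, if_neg (fun hc => h (hiff.mpr hc)), one_mul]

theorem reciprocal_jacobi_formula_case_one
    (a s t : ℤ → ℤ)
    (ha_pos : ∀ k : ℤ, 0 ≤ k → 0 < a k)
    (hs_neg : s (-1) = 1) (ht_neg : t (-1) = 0)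
    (hs_zero : s 0 = a 0) (ht_zero : t 0 = 1)
    (hs_rec : ∀ k : ℤ, 1 ≤ k → s k = a k * s (k - 1) + s (k - 2))
    (ht_rec : ∀ k : ℤ, 1 ≤ k → t k = a k * t (k - 1) + t (k - 2))
    (k : ℤ) (hk : 1 ≤ k) (htk_even : Even (t k)) (hsk1_odd : Odd (s (k - 1))) :
    jacobiSym (t k) (s k).toNat =
      jacobiSym (-(-1 : ℤ) ^ (k - 1).toNat) (s k).toNat *
        jacobiSym ((-1 : ℤ) ^ (k - 1).toNat) (s (k - 1)).toNat *
        eps (s (k - 1)) (s k) * eps (t (k - 1)) (s (k - 1)) *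
        jacobiSym (s (k - 1)) (t (k - 1)).toNat := by
  -- positivity
  have pos : ∀ n : ℤ, 0 ≤ n → 1 ≤ s n ∧ 0 ≤ s (n - 1) ∧ 1 ≤ t n ∧ 0 ≤ t (n - 1) := by
    intro n
    refine Int.le_induction (motive := fun n _ => 1 ≤ s n ∧ 0 ≤ s (n - 1) ∧ 1 ≤ t n ∧ 0 ≤ t (n - 1)) ?_ ?_ n
    · show 1 ≤ s 0 ∧ 0 ≤ s (0 - 1) ∧ 1 ≤ t 0 ∧ 0 ≤ t (0 - 1)
      have h0 : (0 : ℤ) - 1 = -1 := by ring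
      have := ha_pos 0 le_rfl
      rw [h0, hs_zero, ht_zero, hs_neg, ht_neg]
      refine ⟨by omega, by norm_num, le_refl 1, le_refl 0⟩
    · intro n hn ih
      show 1 ≤ s (n + 1) ∧ 0 ≤ s (n + 1 - 1) ∧ 1 ≤ t (n + 1) ∧ 0 ≤ t (n + 1 - 1)
      obtain ⟨h1, h2, h3, h4⟩ := ih
      have e1 : n + 1 - 1 = n := by ring
      have e2 : n + 1 - 2 = n - 1 := by ring
      have hsr := hs_rec (n + 1) (by omega)
      have htr := ht_rec (n + 1) (by omega)
      rw [e1, e2] at hsr htr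
      have han := ha_pos (n + 1) (by omega)
      rw [e1]
      refine ⟨?_, h1.trans' (by norm_num) |>.trans' (le_refl _) , ?_, h3.trans' (by norm_num) |>.trans' (le_refl _)⟩
      · rw [hsr]; nlinarith
      · rw [htr]; nlinarith
  -- determinant identity
  have det : ∀ n : ℤ, 0 ≤ n → s n * t (n - 1) - s (n - 1) * t n = -(-1 : ℤ) ^ n.toNat := by
    intro n
    refine Int.le_induction (motive := fun n _ => s n * t (n - 1) - s (n - 1) * t n = -(-1 : ℤ) ^ n.toNat) ?_ ?_ n
    · show s 0 * t (0 - 1) - s (0 - 1) * t 0 = -(-1 : ℤ) ^ (0 : ℤ).toNat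
      have h0 : (0 : ℤ) - 1 = -1 := by ring
      rw [h0, hs_zero, ht_zero, hs_neg, ht_neg]
      norm_num
    · intro n hn ih
      show s (n + 1) * t (n + 1 - 1) - s (n + 1 - 1) * t (n + 1) = -(-1 : ℤ) ^ (n + 1).toNat
      have e1 : n + 1 - 1 = n := by ring
      have e2 : n + 1 - 2 = n - 1 := by ring
      have hsr := hs_rec (n + 1) (by omega)
      have htr := ht_rec (n + 1) (by omega)
      rw [e1, e2] at hsr htr
      have hT : (n + 1).toNat = n.toNat + 1 := by omega
      rw [e1, hT, pow_succ, hsr, htr]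
      linear_combination (-1 : ℤ) * ih
  -- setup
  have hk0 : (0 : ℤ) ≤ k := by omega
  have hk10 : (0 : ℤ) ≤ k - 1 := by omega
  obtain ⟨hsk_pos, -, htk_pos, -⟩ := pos k hk0
  obtain ⟨hsk1_pos, -, htk1_pos, -⟩ := pos (k - 1) hk10
  have hdet0 := det k hk0
  have hTk : k.toNat = (k - 1).toNat + 1 := by omega
  obtain ⟨δ, hδdef⟩ : ∃ δ : ℤ, δ = (-1 : ℤ) ^ (k - 1).toNat := ⟨_, rfl⟩
  rw [← hδdef]
  have hδ1 : δ = 1 ∨ δ = -1 := by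
    rcases Nat.even_or_odd ((k - 1).toNat) with h | h
    · left; rw [hδdef]; exact Even.neg_one_pow h
    · right; rw [hδdef]; exact Odd.neg_one_pow h
  have hdet : s k * t (k - 1) - s (k - 1) * t k = δ := by
    rw [hdet0, hTk, pow_succ, hδdef]; ring
  have hδ2 : δ * δ = 1 := by rcases hδ1 with h | h <;> rw [h] <;> norm_num
  have hδodd : Odd δ := by
    rcases hδ1 with h | h <;> rw [h]
    · exact odd_one
    · exact ⟨-1, by ring⟩
  -- parities: s k and t (k-1) are odd
  have hodd_prod : Odd (s k * t (k - 1)) := by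
    have he : Even (s (k - 1) * t k) := htk_even.mul_left _
    have : s k * t (k - 1) = δ + s (k - 1) * t k := by linarith
    rw [this]; exact hδodd.add_even he
  have hsk_odd : Odd (s k) := (Int.odd_mul.mp hodd_prod).1
  have htk1_odd : Odd (t (k - 1)) := (Int.odd_mul.mp hodd_prod).2
  -- casts
  have hS : ((s k).toNat : ℤ) = s k := Int.toNat_of_nonneg (by omega)
  have hS1 : ((s (k - 1)).toNat : ℤ) = s (k - 1) := Int.toNat_of_nonneg (by omega)
  -- coprimalities
  have hcop1 : Int.gcd (s (k - 1)) (s k) = 1 := by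
    rw [← Int.isCoprime_iff_gcd_eq_one]
    exact ⟨δ * -(t k), δ * t (k - 1), by linear_combination δ * hdet + hδ2⟩
  have hcop2 : Int.gcd (t (k - 1)) (s (k - 1)) = 1 := by
    rw [← Int.isCoprime_iff_gcd_eq_one]
    exact ⟨δ * s k, δ * -(t k), by linear_combination δ * hdet + hδ2⟩
  -- Step A : J(t k | s k) * J(s (k-1) | s k) = J(-δ | s k)
  have stepA : jacobiSym (t k) (s k).toNat * jacobiSym (s (k - 1)) (s k).toNat
      = jacobiSym (-δ) (s k).toNat := by
    rw [← jacobiSym.mul_left]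
    apply jacobiSym.mod_left'
    rw [hS]
    have : s k ∣ (-δ) - t k * s (k - 1) := ⟨-(t (k - 1)), by linarith⟩
    exact (Int.modEq_iff_dvd.mpr this).symm.symm
  have sqA : jacobiSym (s (k - 1)) (s k).toNat ^ 2 = 1 := by
    apply jacobiSym.sq_one
    rw [hS]; exact hcop1
  have eq1 : jacobiSym (t k) (s k).toNat
      = jacobiSym (-δ) (s k).toNat * jacobiSym (s (k - 1)) (s k).toNat := by
    calc jacobiSym (t k) (s k).toNat
        = jacobiSym (t k) (s k).toNat * (jacobiSym (s (k - 1)) (s k).toNat ^ 2) := by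
          rw [sqA, mul_one]
      _ = (jacobiSym (t k) (s k).toNat * jacobiSym (s (k - 1)) (s k).toNat)
            * jacobiSym (s (k - 1)) (s k).toNat := by ring
      _ = _ := by rw [stepA]
  -- Step C : reciprocity between s (k-1) and s k
  have eq2 : jacobiSym (s (k - 1)) (s k).toNat
      = eps (s (k - 1)) (s k) * jacobiSym (s k) (s (k - 1)).toNat :=
    recipZ (by omega) (by omega) hsk1_odd hsk_odd
  -- Step D : J(s k | s(k-1)) * J(t (k-1) | s(k-1)) = J(δ | s(k-1))
  have stepD : jacobiSym (s k) (s (k - 1)).toNat * jacobiSym (t (k - 1)) (s (k - 1)).toNat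
      = jacobiSym δ (s (k - 1)).toNat := by
    rw [← jacobiSym.mul_left]
    apply jacobiSym.mod_left'
    rw [hS1]
    have : s (k - 1) ∣ δ - s k * t (k - 1) := ⟨-(t k), by linarith⟩
    exact (Int.modEq_iff_dvd.mpr this).symm.symm
  have sqD : jacobiSym (t (k - 1)) (s (k - 1)).toNat ^ 2 = 1 := by
    apply jacobiSym.sq_one
    rw [hS1]; exact hcop2
  have eq3 : jacobiSym (s k) (s (k - 1)).toNat
      = jacobiSym δ (s (k - 1)).toNat * jacobiSym (t (k - 1)) (s (k - 1)).toNat := by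
    calc jacobiSym (s k) (s (k - 1)).toNat
        = jacobiSym (s k) (s (k - 1)).toNat * (jacobiSym (t (k - 1)) (s (k - 1)).toNat ^ 2) := by
          rw [sqD, mul_one]
      _ = (jacobiSym (s k) (s (k - 1)).toNat * jacobiSym (t (k - 1)) (s (k - 1)).toNat)
            * jacobiSym (t (k - 1)) (s (k - 1)).toNat := by ring
      _ = _ := by rw [stepD]
  -- Step F : reciprocity between t (k-1) and s (k-1)
  have eq4 : jacobiSym (t (k - 1)) (s (k - 1)).toNat
      = eps (t (k - 1)) (s (k - 1)) * jacobiSym (s (k - 1)) (t (k - 1)).toNat :=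
    recipZ (by omega) (by omega) htk1_odd hsk1_odd
  rw [eq1, eq2, eq3, eq4]
  ring
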